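/- Let m and n be positive integers with m + 2 ≤ n, and let f₀ : [0,1] → [0,1] be a continuous surjection. Then there exists a continuous surjection f₁ : [0,1] → [0,1] with f₀ ∘ g_n = g_m ∘ f₁ and f₁(0) = 0 whenever f₀(0) = 0. -/

import Mathlib

open Set

noncomputable def vmap (t : ℝ) : ℝ :=
  if Even ⌊t⌋ then t - ⌊t⌋ else ⌊t⌋ + 1 - t

noncomputable def gmap (n : ℕ) (t : ℝ) : ℝ := vmap (n * t)

def Knaster (n : ℕ → ℕ) : Set (ℕ → ℝ) :=
  {x | (∀ j, x j ∈ Icc (0:ℝ) 1) ∧ ∀ j, x j = gmap (n j) (x (j + 1))}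

open Real in
lemma vmap_eq_arccos (t : ℝ) : vmap t = Real.arccos (Real.cos (π * t)) / π := by
  have hπ : (0:ℝ) < π := pi_pos
  have h1 : (⌊t⌋:ℝ) ≤ t := Int.floor_le t
  have h2 : t < ⌊t⌋ + 1 := Int.lt_floor_add_one t
  rcases Int.even_or_odd ⌊t⌋ with ⟨k, hk⟩ | ⟨k, hk⟩
  · have hk' : ((⌊t⌋:ℤ):ℝ) = 2*k := by rw [hk]; push_cast; ring
    have hc : Real.cos (π * t) = Real.cos (π * (t - 2*k)) := by
      have : π * t = π * (t - 2*k) + (k:ℤ) * (2 * π) := by push_cast; ring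
      rw [this, Real.cos_add_int_mul_two_pi]
    have hb1 : 0 ≤ π * (t - 2*k) := by nlinarith
    have hb2 : π * (t - 2*k) ≤ π := by nlinarith
    rw [vmap, if_pos ⟨k, hk⟩, hc, Real.arccos_cos hb1 hb2, hk']
    field_simp
  · have hne : ¬ Even ⌊t⌋ := by
      rw [← Int.not_odd_iff_even]; push_neg; exact ⟨k, hk⟩
    have hk' : ((⌊t⌋:ℤ):ℝ) = 2*k+1 := by rw [hk]; push_cast; ring
    have hc : Real.cos (π * t) = Real.cos (π * (2*k + 2 - t)) := by
      have : π * (2*k + 2 - t) = -(π * t) + ((k+1 : ℤ)) * (2 * π) := by push_cast; ring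
      rw [this, Real.cos_add_int_mul_two_pi, Real.cos_neg]
    have hb1 : 0 ≤ π * (2*k + 2 - t) := by nlinarith
    have hb2 : π * (2*k + 2 - t) ≤ π := by nlinarith
    rw [vmap, if_neg hne, hc, Real.arccos_cos hb1 hb2, hk']
    field_simp
    ring

lemma vmap_continuous : Continuous vmap := by
  have : vmap = fun t => Real.arccos (Real.cos (Real.pi * t)) / Real.pi :=
    funext vmap_eq_arccos
  rw [this]
  exact (Real.continuous_arccos.comp
    (Real.continuous_cos.comp (continuous_const.mul continuous_id))).div_const _

lemma vmap_mem (t : ℝ) : vmap t ∈ Icc (0:ℝ) 1 := by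
  rw [vmap_eq_arccos]
  constructor
  · exact div_nonneg (Real.arccos_nonneg _) Real.pi_pos.le
  · rw [div_le_one Real.pi_pos]
    exact Real.arccos_le_pi _

lemma vmap_of_mem {t : ℝ} (h : t ∈ Icc (0:ℝ) 1) : vmap t = t := by
  rw [vmap_eq_arccos, Real.arccos_cos (by nlinarith [Real.pi_pos, h.1])
    (by nlinarith [Real.pi_pos, h.2])]
  field_simp

lemma vmap_neg (t : ℝ) : vmap (-t) = vmap t := by
  rw [vmap_eq_arccos, vmap_eq_arccos, mul_neg, Real.cos_neg]

lemma vmap_add_two_int (t : ℝ) (k : ℤ) : vmap (t + 2*k) = vmap t := by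
  rw [vmap_eq_arccos, vmap_eq_arccos]
  have : Real.pi * (t + 2*k) = Real.pi * t + (k:ℤ) * (2 * Real.pi) := by push_cast; ring
  rw [this, Real.cos_add_int_mul_two_pi]

lemma vmap_spec (t : ℝ) : ∃ k : ℤ, vmap t = t - 2*k ∨ vmap t = 2*k - t := by
  rcases Int.even_or_odd ⌊t⌋ with ⟨k, hk⟩ | ⟨k, hk⟩
  · refine ⟨k, Or.inl ?_⟩
    rw [vmap, if_pos ⟨k, hk⟩, hk]; push_cast; ring
  · refine ⟨k+1, Or.inr ?_⟩
    have hne : ¬ Even ⌊t⌋ := by rw [← Int.not_odd_iff_even]; push_neg; exact ⟨k, hk⟩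
    rw [vmap, if_neg hne, hk]; push_cast; ring

lemma vmap_m_vmap (m : ℕ) (z : ℝ) : vmap (m * vmap z) = vmap (m * z) := by
  obtain ⟨k, h | h⟩ := vmap_spec z
  · have : (m:ℝ) * vmap z = m * z + 2 * ((-(m * k) : ℤ)) := by rw [h]; push_cast; ring
    rw [this, vmap_add_two_int]
  · have : (m:ℝ) * vmap z = -(m * z) + 2 * ((m * k : ℤ)) := by rw [h]; push_cast; ring
    rw [this, vmap_add_two_int, vmap_neg]

/-- The `j`-th "piece": a shifted/reflected copy of `u`. -/
noncomputable def pfun (u : ℝ → ℝ) (j : ℕ) (x : ℝ) : ℝ :=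
  (if Even j then u x else -u x) - 2 * ((j / 2 : ℕ) : ℝ)

/-- Junction points between pieces. -/
noncomputable def anode (p r : ℝ) : ℕ → ℝ
  | 0 => 0
  | (j+1) => if Even j then (j : ℝ) + p else ((j : ℝ) + 1) - r

lemma anode_succ (p r : ℝ) (j : ℕ) :
    anode p r (j+1) = if Even j then (j : ℝ) + p else ((j : ℝ) + 1) - r := rfl

/-- The glued lift, up to piece `j`. -/
noncomputable def Gs (u : ℝ → ℝ) (p r : ℝ) : ℕ → ℝ → ℝ
  | 0 => pfun u 0
  | (j+1) => fun x => if x ≤ anode p r (j+1) then Gs u p r j x else pfun u (j+1) x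

lemma vmap_sub_two_nat (t : ℝ) (k : ℕ) : vmap (t - 2*k) = vmap t := by
  have h : t - 2*(k:ℝ) = t + 2*(((-(k:ℤ)) : ℤ) : ℝ) := by push_cast; ring
  rw [h, vmap_add_two_int]

lemma pfun_cont {u : ℝ → ℝ} (hcu : Continuous u) (j : ℕ) : Continuous (pfun u j) := by
  by_cases h : Even j
  · have h1 : pfun u j = fun x => u x - 2 * ((j / 2 : ℕ) : ℝ) := by
      funext x; simp [pfun, h]
    rw [h1]; exact hcu.sub continuous_const
  · have h1 : pfun u j = fun x => -(u x) - 2 * ((j / 2 : ℕ) : ℝ) := by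
      funext x; simp [pfun, h]
    rw [h1]; exact hcu.neg.sub continuous_const

lemma pfun_vmap {u : ℝ → ℝ} (hum : ∀ x, vmap (u x) = u x) (j : ℕ) (x : ℝ) :
    vmap (pfun u j x) = u x := by
  by_cases h : Even j
  · have h1 : pfun u j x = u x - 2 * ((j / 2 : ℕ) : ℝ) := by simp [pfun, h]
    rw [h1, vmap_sub_two_nat, hum]
  · have h1 : pfun u j x = -(u x) - 2 * ((j / 2 : ℕ) : ℝ) := by simp [pfun, h]
    rw [h1, vmap_sub_two_nat, vmap_neg, hum]

section GsLemmas

variable {u : ℝ → ℝ} {p r : ℝ}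

lemma gs_ge (hmono : ∀ j, anode p r j ≤ anode p r (j+1))
    (hjun : ∀ j, pfun u j (anode p r (j+1)) = pfun u (j+1) (anode p r (j+1))) :
    ∀ j x, anode p r j ≤ x → Gs u p r j x = pfun u j x := by
  intro j
  induction j with
  | zero => intro x _; rfl
  | succ j ih =>
    intro x hx
    show (if x ≤ anode p r (j+1) then Gs u p r j x else pfun u (j+1) x) = _
    by_cases h : x ≤ anode p r (j+1)
    · have hxe : x = anode p r (j+1) := le_antisymm h hx
      rw [if_pos h, hxe, ih _ (hmono j), hjun j]
    · rw [if_neg h]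

lemma gs_cont (hcu : Continuous u) (hmono : ∀ j, anode p r j ≤ anode p r (j+1))
    (hjun : ∀ j, pfun u j (anode p r (j+1)) = pfun u (j+1) (anode p r (j+1))) :
    ∀ j, Continuous (Gs u p r j) := by
  intro j
  induction j with
  | zero => exact pfun_cont hcu 0
  | succ j ih =>
    show Continuous fun x => if x ≤ anode p r (j+1) then Gs u p r j x else pfun u (j+1) x
    refine Continuous.if_le ih (pfun_cont hcu (j+1)) continuous_id continuous_const ?_
    intro x hx
    change x = anode p r (j+1) at hx
    rw [hx, gs_ge hmono hjun j _ (hmono j), hjun j]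

lemma gs_agree (hmono : ∀ j, anode p r j ≤ anode p r (j+1)) :
    ∀ k j, k ≤ j → ∀ x, x ≤ anode p r (k+1) → Gs u p r j x = Gs u p r k x := by
  have hmon : Monotone (anode p r) := monotone_nat_of_le_succ hmono
  intro k j hkj
  induction j, hkj using Nat.le_induction with
  | base => intro x _; rfl
  | succ j hkj ih =>
    intro x hx
    have hx' : x ≤ anode p r (j+1) := hx.trans (hmon (by omega))
    show (if x ≤ anode p r (j+1) then Gs u p r j x else pfun u (j+1) x) = _
    rw [if_pos hx', ih x hx]

lemma gs_vmap (hum : ∀ x, vmap (u x) = u x) :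
    ∀ j x, vmap (Gs u p r j x) = u x := by
  intro j
  induction j with
  | zero => intro x; exact pfun_vmap hum 0 x
  | succ j ih =>
    intro x
    show vmap (if x ≤ anode p r (j+1) then Gs u p r j x else pfun u (j+1) x) = u x
    by_cases h : x ≤ anode p r (j+1)
    · rw [if_pos h, ih]
    · rw [if_neg h, pfun_vmap hum]

end GsLemmas

theorem folding_lemma_q_one (m n : ℕ) (hm : 0 < m) (hn : 0 < n) (hmn : m + 2 ≤ n)
    (f₀ : ℝ → ℝ) (hf₀c : ContinuousOn f₀ (Set.Icc 0 1))
    (hf₀s : f₀ '' Set.Icc 0 1 = Set.Icc 0 1) :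
    ∃ f₁ : ℝ → ℝ, ContinuousOn f₁ (Set.Icc 0 1) ∧
      f₁ '' Set.Icc 0 1 = Set.Icc 0 1 ∧
      (∀ t ∈ Set.Icc (0:ℝ) 1, f₀ (gmap n t) = gmap m (f₁ t)) ∧
      (f₀ 0 = 0 → f₁ 0 = 0) := by
  have hmR : (0:ℝ) < m := by exact_mod_cast hm
  have hnR : (0:ℝ) < n := by exact_mod_cast hn
  obtain ⟨p, hp, hfp⟩ : ∃ p ∈ Icc (0:ℝ) 1, f₀ p = 0 := by
    have h0 : (0:ℝ) ∈ f₀ '' Icc 0 1 := by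
      rw [hf₀s]; exact ⟨le_refl _, zero_le_one⟩
    obtain ⟨p, hp, h⟩ := h0; exact ⟨p, hp, h⟩
  obtain ⟨r, hr, hfr⟩ : ∃ r ∈ Icc (0:ℝ) 1, f₀ r = 1 := by
    have h1 : (1:ℝ) ∈ f₀ '' Icc 0 1 := by
      rw [hf₀s]; exact ⟨zero_le_one, le_refl _⟩
    obtain ⟨r, hr, h⟩ := h1; exact ⟨r, hr, h⟩
  set u : ℝ → ℝ := fun x => f₀ (vmap x) with hu
  have hcu : Continuous u := hf₀c.comp_continuous vmap_continuous vmap_mem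
  have humem : ∀ x, u x ∈ Icc (0:ℝ) 1 := by
    intro x
    have : u x ∈ f₀ '' Icc 0 1 := ⟨vmap x, vmap_mem x, rfl⟩
    rwa [hf₀s] at this
  have hum : ∀ x, vmap (u x) = u x := fun x => vmap_of_mem (humem x)
  have hv0 : vmap 0 = 0 := vmap_of_mem ⟨le_refl _, zero_le_one⟩
  -- values of u at the nodes
  have hnode0 : ∀ j : ℕ, Even j → u ((j:ℝ) + p) = 0 := by
    rintro j ⟨i, hi⟩
    have h1 : ((j:ℝ) + p) = p + 2*((i:ℤ)) := by subst hi; push_cast; ring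
    simp only [hu]
    rw [h1, vmap_add_two_int, vmap_of_mem hp, hfp]
  have hnode1 : ∀ j : ℕ, Even j → u ((j:ℝ) - r) = 1 := by
    rintro j ⟨i, hi⟩
    have h1 : ((j:ℝ) - r) = -r + 2*((i:ℤ)) := by subst hi; push_cast; ring
    simp only [hu]
    rw [h1, vmap_add_two_int, vmap_neg, vmap_of_mem hr, hfr]
  -- monotonicity of nodes
  have hmono : ∀ j, anode p r j ≤ anode p r (j+1) := by
    intro j
    cases j with
    | zero =>
      rw [show anode p r 0 = 0 from rfl, anode_succ, if_pos Even.zero]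
      simpa using hp.1
    | succ j =>
      rw [anode_succ, anode_succ]
      rcases Nat.even_or_odd j with h | h
      · have h' : ¬ Even (j+1) := by simp [Nat.even_add_one, h]
        rw [if_pos h, if_neg h']
        push_cast
        have h1 := hp.1; have h2 := hp.2; have h3 := hr.1; have h4 := hr.2; linarith
      · have hne : ¬ Even j := Nat.not_even_iff_odd.mpr h
        have h' : Even (j+1) := Nat.even_add_one.mpr hne
        rw [if_neg hne, if_pos h']
        push_cast
        have h1 := hp.1; have h2 := hp.2; have h3 := hr.1; have h4 := hr.2; linarith
  -- junction property
  have hjun : ∀ j, pfun u j (anode p r (j+1)) = pfun u (j+1) (anode p r (j+1)) := by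
    intro j
    rcases Nat.even_or_odd j with h | h
    · have h' : ¬ Even (j+1) := by simp [Nat.even_add_one, h]
      have ha : anode p r (j+1) = (j:ℝ) + p := by rw [anode_succ, if_pos h]
      have hdiv : ((j+1) / 2 : ℕ) = (j / 2 : ℕ) := by
        obtain ⟨i, hi⟩ := h; omega
      rw [ha]
      simp only [pfun, if_pos h, if_neg h', hnode0 j h, hdiv]
      ring
    · have hne : ¬ Even j := Nat.not_even_iff_odd.mpr h
      have h' : Even (j+1) := Nat.even_add_one.mpr hne
      have ha : anode p r (j+1) = ((j:ℝ) + 1) - r := by rw [anode_succ, if_neg hne]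
      have hval : u (((j:ℝ)+1) - r) = 1 := by
        have h2 := hnode1 (j+1) h'
        push_cast at h2
        exact h2
      have hdiv : ((j+1) / 2 : ℕ) = (j / 2 : ℕ) + 1 := by
        rw [Nat.even_iff] at h'; omega
      rw [ha]
      simp only [pfun, if_pos h', if_neg hne, hval, hdiv]
      push_cast
      ring
  -- the lift and f₁
  set i' : ℕ := (m+1)/2 with hi'
  set J : ℕ := 2*i' + 1 with hJ
  set G : ℝ → ℝ := Gs u p r J with hG
  have hGc : Continuous G := gs_cont hcu hmono hjun J
  set f₁ : ℝ → ℝ := fun t => vmap (G ((n:ℝ) * t) / m) with hf₁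
  have hf₁c : Continuous f₁ :=
    vmap_continuous.comp
      ((hGc.comp (continuous_const.mul continuous_id)).div_const _)
  -- value of G at 0
  have hG0 : G 0 = f₀ 0 := by
    have hanode1 : anode p r 1 = p := by
      rw [anode_succ, if_pos Even.zero]; push_cast; ring
    have h0p : (0:ℝ) ≤ anode p r (0+1) := by rw [hanode1]; exact hp.1
    have h2 := gs_agree (u := u) hmono 0 J (by omega) 0 h0p
    rw [hG, h2]
    show pfun u 0 0 = f₀ 0
    simp [pfun, hu, hv0]
  -- value of G at the deep node
  have hanodeJ : anode p r J = 2*(i':ℝ) + p := by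
    rw [hJ, anode_succ, if_pos ⟨i', by ring⟩]; push_cast; ring
  have hGJ : G (2*(i':ℝ) + p) = -(2*(i':ℝ)) := by
    have h1 : anode p r J ≤ 2*(i':ℝ) + p := by rw [hanodeJ]
    have h2 := gs_ge hmono hjun J _ h1
    rw [hG, h2]
    have hodd : ¬ Even J := by simp [hJ, Nat.even_add_one, parity_simps]
    have hval : u (2*(i':ℝ) + p) = 0 := by
      have h3 := hnode0 (2*i') ⟨i', by ring⟩
      push_cast at h3
      exact h3
    have hdivJ : (J / 2 : ℕ) = i' := by omega
    simp only [pfun, if_neg hodd, hval, hdivJ]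
    ring
  refine ⟨f₁, hf₁c.continuousOn, ?_, ?_, ?_⟩
  · -- surjectivity
    apply Subset.antisymm
    · rintro y ⟨t, _, rfl⟩
      exact vmap_mem _
    · intro c hc
      set t' : ℝ := (2*(i':ℝ) + p)/n with ht'
      have hi'm : (m:ℝ) ≤ 2*(i':ℝ) := by
        have h4 : m ≤ 2*i' := by omega
        exact_mod_cast h4
      have hi'n : 2*(i':ℝ) + p ≤ n := by
        have h2 : 2*i' ≤ m+1 := by omega
        have h2R : 2*(i':ℝ) ≤ (m:ℝ)+1 := by exact_mod_cast h2
        have hnR' : (m:ℝ) + 2 ≤ n := by exact_mod_cast hmn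
        have := hp.2
        linarith
      have ht'0 : 0 ≤ t' := by
        apply div_nonneg _ hnR.le
        have := hp.1; positivity
      have ht'1 : t' ≤ 1 := by
        rw [ht', div_le_one hnR]; exact hi'n
      set φ : ℝ → ℝ := fun t => G ((n:ℝ) * t) with hφ
      have hφc : Continuous φ := hGc.comp (continuous_const.mul continuous_id)
      have hφ0 : φ 0 = f₀ 0 := by simp only [hφ, mul_zero, hG0]
      have hφt' : φ t' = -(2*(i':ℝ)) := by
        have h5 : (n:ℝ) * t' = 2*(i':ℝ) + p := by
          rw [ht']; field_simp
        simp only [hφ, h5, hGJ]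
      have hmem : -((m:ℝ)*c) ∈ Icc (φ t') (φ 0) := by
        constructor
        · rw [hφt']
          have : (m:ℝ)*c ≤ m := by nlinarith [hc.1, hc.2]
          linarith
        · rw [hφ0]
          have h1 : (0:ℝ) ≤ (m:ℝ)*c := mul_nonneg hmR.le hc.1
          have h2 : (0:ℝ) ≤ f₀ 0 := by
            have h6 := humem 0
            simp only [hu, hv0] at h6
            exact h6.1
          linarith
      obtain ⟨t, ht, hφt⟩ := intermediate_value_Icc' ht'0 hφc.continuousOn hmem
      refine ⟨t, ⟨ht.1, ht.2.trans ht'1⟩, ?_⟩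
      show vmap (G ((n:ℝ)*t) / m) = c
      have h7 : G ((n:ℝ)*t) = -((m:ℝ)*c) := hφt
      rw [h7]
      have h3 : -((m:ℝ)*c)/m = -c := by rw [neg_div, mul_div_cancel_left₀ _ hmR.ne']
      rw [h3, vmap_neg, vmap_of_mem hc]
  · -- functional equation
    intro t _
    show f₀ (vmap ((n:ℝ)*t)) = vmap ((m:ℝ) * f₁ t)
    have h1 : vmap ((m:ℝ) * f₁ t) = vmap ((m:ℝ) * (G ((n:ℝ)*t) / m)) :=
      vmap_m_vmap m _
    have h2 : (m:ℝ) * (G ((n:ℝ)*t) / m) = G ((n:ℝ)*t) := by field_simp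
    rw [h1, h2, hG, gs_vmap (u := u) hum]
  · -- base point
    intro h0
    show vmap (G ((n:ℝ)*0) / m) = 0
    rw [show (n:ℝ) * 0 = 0 from mul_zero _, hG0, h0, zero_div, hv0]
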